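/- Let H be a real Hilbert space, let A, B ⊆ H be nonempty closed convex sets, let α, β ∈ (0, 1), and let q ∈ H. Suppose that either A ∩ B = ∅, or A ∩ B ≠ ∅ but q − P_{A∩B}(q) ∉ N_A(P_{A∩B}(q)) + N_B(P_{A∩B}(q)). Given any x₀ ∈ H, define x_{n+1} = T_{A−q,B−q,α,β}(x_n) for n ≥ 0. Then ‖x_n‖ → ∞. -/

import Mathlib

set_option maxHeartbeats 1000000


open RealInnerProductSpace Pointwise Filter
open Topology

/-- The normal cone to a convex set `C` at `x` (empty when `x ∉ C`). -/
def normalCone {H : Type*} [NormedAddCommGroup H] [InnerProductSpace ℝ H]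
    (C : Set H) (x : H) : Set H :=
  {u | x ∈ C ∧ ∀ c ∈ C, ⟪u, c - x⟫ ≤ 0}

section AAMRAux
variable {H : Type*} [NormedAddCommGroup H] [InnerProductSpace ℝ H]

lemma aamr_norm_sq (a : H) : ‖a‖^2 = ⟪a,a⟫ := (real_inner_self_eq_norm_sq a).symm

lemma aamr_comb (t : ℝ) (a b : H) :
    ‖(1-t)•a + t•b‖^2 = (1-t)*‖a‖^2 + t*‖b‖^2 - t*(1-t)*‖a-b‖^2 := by
  simp only [aamr_norm_sq, inner_add_left, inner_add_right, inner_sub_left, inner_sub_right,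
    real_inner_smul_left, real_inner_smul_right]
  ring

/-- variational inequality for a nearest-point map onto a convex set -/
lemma aamr_vi {C : Set H} (hC : Convex ℝ C) {P : H → H}
    (hP : ∀ x, P x ∈ C ∧ ∀ c ∈ C, ‖x - P x‖ ≤ ‖x - c‖) (x : H) {a : H} (ha : a ∈ C) :
    ⟪x - P x, a - P x⟫ ≤ 0 := by
  have key : ∀ t : ℝ, t ∈ Set.Ioo (0:ℝ) 1 → ⟪x - P x, a - P x⟫ ≤ t/2 * ‖a - P x‖^2 := by
    intro t ht
    have hmem : (1-t) • P x + t • a ∈ C := hC (hP x).1 ha (by linarith [ht.2]) ht.1.le (by ring)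
    have h1 : ‖x - P x‖ ≤ ‖x - ((1-t) • P x + t • a)‖ := (hP x).2 _ hmem
    have h2 : x - ((1-t) • P x + t • a) = (x - P x) - t • (a - P x) := by
      simp [smul_sub, sub_smul]; abel
    have h3 : ‖x - P x‖^2 ≤ ‖(x - P x) - t • (a - P x)‖^2 := by
      rw [← h2]; exact pow_le_pow_left₀ (norm_nonneg _) h1 2
    have h4 : ‖(x - P x) - t • (a - P x)‖^2
        = ‖x - P x‖^2 - 2*t*⟪x - P x, a - P x⟫ + t^2*‖a - P x‖^2 := by
      rw [norm_sub_sq_real, real_inner_smul_right, norm_smul]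
      simp [mul_pow, abs_of_pos ht.1]
      ring
    nlinarith [ht.1]
  have : Tendsto (fun t : ℝ => t/2 * ‖a - P x‖^2) (nhdsWithin 0 (Set.Ioo 0 1)) (𝓝 0) := by
    have h : Continuous (fun t : ℝ => t/2 * ‖a - P x‖^2) := by continuity
    have h2 := (h.tendsto (0:ℝ)).mono_left (nhdsWithin_le_nhds (s := Set.Ioo 0 1))
    simpa using h2
  have hne : (nhdsWithin (0:ℝ) (Set.Ioo 0 1)).NeBot := by
    apply mem_closure_iff_nhdsWithin_neBot.1
    rw [closure_Ioo one_ne_zero.symm]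
    exact ⟨le_refl 0, by norm_num⟩
  exact ge_of_tendsto this (eventually_nhdsWithin_of_forall (fun t ht => key t ht))

lemma aamr_firm {C : Set H} (hC : Convex ℝ C) {P : H → H}
    (hP : ∀ x, P x ∈ C ∧ ∀ c ∈ C, ‖x - P x‖ ≤ ‖x - c‖) (x y : H) :
    ‖P x - P y‖^2 ≤ ⟪P x - P y, x - y⟫ := by
  have h1 := aamr_vi hC hP x (hP y).1
  have h2 := aamr_vi hC hP y (hP x).1
  have e1 : ⟪P x - P y, x - y⟫ - ‖P x - P y‖^2
      = (-⟪x - P x, P y - P x⟫) + (-⟪y - P y, P x - P y⟫) := by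
    simp only [aamr_norm_sq, inner_sub_left, inner_sub_right, inner_neg_left, inner_neg_right]
    ring_nf
    rw [real_inner_comm (P y) x, real_inner_comm (P y) (P x), real_inner_comm (P x) y,
      real_inner_comm x (P x), real_inner_comm y (P y)]
    ring
  nlinarith

lemma aamr_refl_nonexp {C : Set H} (hC : Convex ℝ C) {P : H → H}
    (hP : ∀ x, P x ∈ C ∧ ∀ c ∈ C, ‖x - P x‖ ≤ ‖x - c‖) {β : ℝ} (hβ : β ∈ Set.Ioo (0:ℝ) 1)
    (x y : H) : ‖((2*β) • P x - x) - ((2*β) • P y - y)‖ ≤ ‖x - y‖ := by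
  have hrefl : ‖((2:ℝ) • P x - x) - ((2:ℝ) • P y - y)‖ ≤ ‖x - y‖ := by
    have hf := aamr_firm hC hP x y
    have e : ‖((2:ℝ) • P x - x) - ((2:ℝ) • P y - y)‖^2
        = ‖x - y‖^2 + 4*‖P x - P y‖^2 - 4*⟪P x - P y, x - y⟫ := by
      simp only [aamr_norm_sq, inner_sub_left, inner_sub_right,
        real_inner_smul_left, real_inner_smul_right]
      ring_nf
      rw [real_inner_comm y x, real_inner_comm (P y) (P x), real_inner_comm (P y) x,
        real_inner_comm (P x) y, real_inner_comm x (P x), real_inner_comm y (P y)]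
      ring
    have : ‖((2:ℝ) • P x - x) - ((2:ℝ) • P y - y)‖^2 ≤ ‖x - y‖^2 := by nlinarith
    have := Real.sqrt_le_sqrt this
    rwa [Real.sqrt_sq (norm_nonneg _), Real.sqrt_sq (norm_nonneg _)] at this
  have e2 : ((2*β) • P x - x) - ((2*β) • P y - y)
      = β • (((2:ℝ) • P x - x) - ((2:ℝ) • P y - y)) + (1-β) • (-(x - y)) := by
    simp only [smul_sub, smul_smul, sub_smul, one_smul, smul_neg]
    abel_nf
    rw [show (2*β) = β*2 by ring]
    abel
  calc ‖((2*β) • P x - x) - ((2*β) • P y - y)‖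
      ≤ β * ‖((2:ℝ) • P x - x) - ((2:ℝ) • P y - y)‖ + (1-β) * ‖x - y‖ := by
        rw [e2]
        refine (norm_add_le _ _).trans ?_
        rw [norm_smul, norm_smul, norm_neg, Real.norm_eq_abs, Real.norm_eq_abs,
          abs_of_pos hβ.1, abs_of_pos (by linarith [hβ.2] : (0:ℝ) < 1 - β)]
    _ ≤ β * ‖x - y‖ + (1-β) * ‖x - y‖ := by nlinarith [hβ.1]
    _ = ‖x - y‖ := by ring

lemma aamr_mid (a b c : H) :
    ‖a - (2:ℝ)⁻¹•(b+c)‖^2 = 2⁻¹*‖a-b‖^2 + 2⁻¹*‖a-c‖^2 - 4⁻¹*‖b-c‖^2 := by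
  simp only [aamr_norm_sq, inner_add_left, inner_add_right, inner_sub_left, inner_sub_right,
    real_inner_smul_left, real_inner_smul_right]
  ring

lemma aamr_sqrt_le {a b : ℝ} (hb : 0 ≤ b) (h : a^2 ≤ b^2) : a ≤ b := by nlinarith

lemma aamr_diverge [CompleteSpace H] {T : H → H} {k : ℝ} (hk : 0 < k)
    (hkey : ∀ x y : H, ‖T x - T y‖^2 + k*‖(x - T x) - (y - T y)‖^2 ≤ ‖x - y‖^2)
    (hfix : ∀ c, T c ≠ c)
    (x : ℕ → H) (hrec : ∀ n, x (n + 1) = T (x n)) :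
    Tendsto (fun n => ‖x n‖) atTop atTop := by
  set D : H → H := fun z => z - T z with hD
  have hTnon : ∀ a b : H, ‖T a - T b‖ ≤ ‖a - b‖ := by
    intro a b
    refine aamr_sqrt_le (norm_nonneg _) ?_
    nlinarith [hkey a b, norm_nonneg ((a - T a) - (b - T b)), sq_nonneg ‖(a - T a) - (b - T b)‖]
  have hmono : ∀ a b : H, 0 ≤ ⟪D a - D b, a - b⟫ := by
    intro a b
    have he : ‖T a - T b‖^2 = ‖a - b‖^2 - 2*⟪D a - D b, a - b⟫ + ‖D a - D b‖^2 := by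
      have : T a - T b = (a - b) - (D a - D b) := by simp [hD]; abel
      rw [this, norm_sub_sq_real, real_inner_comm]
    have := hkey a b
    rw [he] at this
    nlinarith [sq_nonneg ‖D a - D b‖, norm_nonneg (D a - D b)]
  set d : ℕ → H := fun n => D (x n) with hd
  have hdx : ∀ n, x (n+1) = x n - d n := by intro n; simp [hd, hD, hrec n]
  have hDT : ∀ z : H, ‖D (T z)‖ ≤ ‖D z‖ := fun z => hTnon z (T z)
  have hdstep : ∀ n, ‖d (n+1)‖ ≤ ‖d n‖ := by
    intro n; simp only [hd, hrec n]; exact hDT (x n)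
  have hdanti : Antitone (fun n => ‖d n‖) := antitone_nat_of_succ_le hdstep
  set ρ : ℝ := ⨅ n, ‖d n‖ with hρ
  have hbdd : BddBelow (Set.range fun n => ‖d n‖) := ⟨0, by rintro - ⟨n, rfl⟩; exact norm_nonneg _⟩
  have hρ0 : 0 ≤ ρ := le_ciInf fun n => norm_nonneg _
  have hρle : ∀ n, ρ ≤ ‖d n‖ := fun n => ciInf_le hbdd n
  have hρtend : Tendsto (fun n => ‖d n‖) atTop (𝓝 ρ) := tendsto_atTop_ciInf hdanti hbdd
  -- orbit displacements decrease
  have horb : ∀ (y : H) (n : ℕ), ‖D (T^[n] y)‖ ≤ ‖D y‖ := by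
    intro y n
    induction n with
    | zero => simp
    | succ m ih =>
      rw [Function.iterate_succ_apply']
      exact (hDT _).trans ih
  -- telescoping sum bound
  have hsumb : ∀ (y : H) (N : ℕ),
      (∑ i ∈ Finset.range N, k*‖d i - D (T^[i] y)‖^2) + ‖x N - T^[N] y‖^2 ≤ ‖x 0 - y‖^2 := by
    intro y N
    induction N with
    | zero => simp
    | succ m ih =>
      have hstep := hkey (x m) (T^[m] y)
      rw [Finset.sum_range_succ]
      have e1 : x (m+1) = T (x m) := hrec m
      have e2 : T^[m+1] y = T (T^[m] y) := Function.iterate_succ_apply' T m y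
      rw [e1, e2]
      have : d m - D (T^[m] y) = (x m - T (x m)) - (T^[m] y - T (T^[m] y)) := by
        simp [hd, hD]
      rw [this]
      nlinarith [hstep, ih]
  have hρ_le : ∀ y : H, ρ ≤ ‖D y‖ := by
    intro y
    set e : ℕ → ℝ := fun i => ‖d i - D (T^[i] y)‖ with he
    have hsummable : Summable (fun i => k * e i ^ 2) := by
      apply summable_of_sum_range_le (c := ‖x 0 - y‖^2)
      · intro n; positivity
      · intro n
        have := hsumb y n
        nlinarith [sq_nonneg ‖x n - T^[n] y‖, norm_nonneg (x n - T^[n] y)]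
    have he2 : Tendsto (fun i => e i ^ 2) atTop (𝓝 0) := by
      have h := hsummable.tendsto_atTop_zero
      have := h.const_mul (k⁻¹)
      simp only [mul_zero] at this
      convert this using 2 with i
      field_simp
    have hetend : Tendsto e atTop (𝓝 0) := by
      have := he2.sqrt
      rw [Real.sqrt_zero] at this
      convert this using 2 with i
      rw [Real.sqrt_sq (norm_nonneg _)]
    have hbound : ∀ i, ρ ≤ ‖D y‖ + e i := by
      intro i
      have h1 : ‖d i‖ ≤ ‖D (T^[i] y)‖ + e i := by
        have := norm_sub_norm_le (d i) (D (T^[i] y))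
        simp only [he]; linarith [norm_sub_norm_le (d i) (D (T^[i] y))]
      linarith [hρle i, horb y i, h1]
    have : Tendsto (fun i => ‖D y‖ + e i) atTop (𝓝 (‖D y‖ + 0)) := tendsto_const_nhds.add hetend
    rw [add_zero] at this
    exact ge_of_tendsto this (Eventually.of_forall hbound)
  -- midpoint of displacements has norm ≥ ρ
  have hmid : ∀ a b : H, ρ ≤ ‖(2:ℝ)⁻¹ • (D a + D b)‖ := by
    intro a b
    set u : H := (2:ℝ)⁻¹ • (D a + D b) with hu
    have hε : ∀ ε : ℝ, 0 < ε → ρ ≤ ‖u‖ + ε*‖a+b‖ + Real.sqrt ((‖u - D a‖*‖a-b‖)*ε) := by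
      intro ε hεpos
      -- solve D z + ε z = u by contraction
      obtain ⟨z, hz⟩ : ∃ z : H, D z + ε • z = u := by
        set K : NNReal := ⟨(1+ε)⁻¹, by positivity⟩ with hK
        have hK1 : K < 1 := by
          rw [← NNReal.coe_lt_coe]
          show (1+ε)⁻¹ < 1
          rw [inv_lt_one_iff₀]; right; linarith
        set F : H → H := fun z => (1+ε)⁻¹ • (T z + u) with hF
        have hLip : LipschitzWith K F := by
          apply LipschitzWith.of_dist_le_mul
          intro p r
          simp only [hF, dist_eq_norm]
          rw [← smul_sub]
          have e : (T p + u) - (T r + u) = T p - T r := by abel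
          rw [e, norm_smul, Real.norm_eq_abs, abs_of_pos (by positivity)]
          have : (K : ℝ) = (1+ε)⁻¹ := rfl
          rw [this]
          exact mul_le_mul_of_nonneg_left (hTnon p r) (by positivity)
        have hcon : ContractingWith K F := ⟨hK1, hLip⟩
        have : Nonempty H := ⟨0⟩
        obtain ⟨z, hz, -⟩ := hcon.exists_fixedPoint (0:H) (edist_lt_top 0 (F 0)).ne
        refine ⟨z, ?_⟩
        have hzeq : (1+ε)⁻¹ • (T z + u) = z := hz
        have hth : T z + u = (1+ε) • z := by
          have h5 := congrArg (fun w : H => (1+ε) • w) hzeq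
          simpa [smul_smul, mul_inv_cancel₀ (show (1:ℝ)+ε ≠ 0 by positivity)] using h5
        calc D z + ε • z = (1+ε) • z - T z := by simp only [hD]; module
          _ = (T z + u) - T z := by rw [← hth]
          _ = u := by abel
      -- monotonicity estimates
      have hDz : D z = u - ε • z := by rw [← hz]; abel
      have h1 := hmono z a
      have h2 := hmono z b
      set w : H := u - D a with hw
      have hw2 : u - D b = -w := by
        rw [hw, hu]; module
      have key : 2*ε*‖z‖^2 ≤ ‖w‖*‖a-b‖ + ε*(‖z‖*‖a+b‖) := by
        have e1 : D z - D a = w - ε • z := by rw [hDz, hw]; abel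
        have e2 : D z - D b = -w - ε • z := by rw [hDz, ← hw2]; abel
        rw [e1] at h1; rw [e2] at h2
        have hsum : 0 ≤ ⟪w - ε • z, z - a⟫ + ⟪-w - ε • z, z - b⟫ := add_nonneg h1 h2
        have hexp : ⟪w - ε • z, z - a⟫ + ⟪-w - ε • z, z - b⟫
            = ⟪w, b - a⟫ - 2*ε*‖z‖^2 + ε*⟪z, a + b⟫ := by
          simp only [aamr_norm_sq, inner_sub_left, inner_sub_right, inner_add_right,
            inner_neg_left, real_inner_smul_left]
          ring
        rw [hexp] at hsum
        have hcs1 : ⟪w, b - a⟫ ≤ ‖w‖*‖a-b‖ := by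
          calc ⟪w, b - a⟫ ≤ ‖w‖*‖b-a‖ := real_inner_le_norm w (b-a)
            _ = ‖w‖*‖a-b‖ := by rw [norm_sub_rev b a]
        have hcs2 : ⟪z, a + b⟫ ≤ ‖z‖*‖a+b‖ := real_inner_le_norm z (a+b)
        have hcs2' : ε*⟪z, a + b⟫ ≤ ε*(‖z‖*‖a+b‖) := mul_le_mul_of_nonneg_left hcs2 hεpos.le
        linarith
      -- deduce ε‖z‖ ≤ ε‖a+b‖ + √(Cε)
      set C : ℝ := ‖w‖*‖a-b‖ with hC
      have hC0 : 0 ≤ C := by positivity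
      have hεz : ε*‖z‖ ≤ ε*‖a+b‖ + Real.sqrt (C*ε) := by
        rcases le_or_gt ‖z‖ ‖a+b‖ with h | h
        · have h6 : ε*‖z‖ ≤ ε*‖a+b‖ := mul_le_mul_of_nonneg_left h hεpos.le
          linarith [Real.sqrt_nonneg (C*ε)]
        · have h5 : ε*(‖z‖*‖a+b‖) ≤ ε*(‖z‖*‖z‖) :=
            mul_le_mul_of_nonneg_left
              (mul_le_mul_of_nonneg_left h.le (norm_nonneg z)) hεpos.le
          have h3 : ε*‖z‖^2 ≤ C := by
            have e7 : ‖z‖*‖z‖ = ‖z‖^2 := (sq ‖z‖).symm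
            rw [e7] at h5; linarith
          have h4 : (ε*‖z‖)^2 ≤ C*ε := by
            have h8 : ε*(ε*‖z‖^2) ≤ ε*C := mul_le_mul_of_nonneg_left h3 hεpos.le
            calc (ε*‖z‖)^2 = ε*(ε*‖z‖^2) := by ring
              _ ≤ ε*C := h8
              _ = C*ε := by ring
          have h9 := Real.sqrt_le_sqrt h4
          rw [Real.sqrt_sq (by positivity)] at h9
          linarith [mul_nonneg hεpos.le (norm_nonneg (a+b))]
      have hfin : ρ ≤ ‖D z‖ := hρ_le z
      have : ‖D z‖ ≤ ‖u‖ + ε*‖z‖ := by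
        rw [hDz]
        refine (norm_sub_le _ _).trans ?_
        simp [norm_smul, abs_of_pos hεpos]
      linarith
    -- let ε → 0
    have hcont : Tendsto (fun ε : ℝ => ‖u‖ + ε*‖a+b‖ + Real.sqrt ((‖u - D a‖*‖a-b‖)*ε))
        (𝓝[>] (0:ℝ)) (𝓝 (‖u‖)) := by
      have h : Continuous (fun ε : ℝ => ‖u‖ + ε*‖a+b‖ + Real.sqrt ((‖u - D a‖*‖a-b‖)*ε)) := by
        continuity
      have h2 := (h.tendsto (0:ℝ)).mono_left (nhdsWithin_le_nhds (s := Set.Ioi 0))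
      simpa using h2
    exact ge_of_tendsto hcont (eventually_nhdsWithin_of_forall (fun ε hε' => hε ε hε'))
  -- d is Cauchy
  have hpar : ∀ n m : ℕ, ‖d n - d m‖^2 ≤ 2*‖d n‖^2 + 2*‖d m‖^2 - 4*ρ^2 := by
    intro n m
    have h1 := hmid (x n) (x m)
    have h2 : ‖d n + d m‖^2 = 4*‖(2:ℝ)⁻¹ • (d n + d m)‖^2 := by
      rw [norm_smul]
      simp
      ring
    have h3 : ρ^2 ≤ ‖(2:ℝ)⁻¹ • (d n + d m)‖^2 := by
      have := hmid (x n) (x m)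
      nlinarith [norm_nonneg ((2:ℝ)⁻¹ • (D (x n) + D (x m)))]
    have h4 : ‖d n - d m‖^2 + ‖d n + d m‖^2 = 2*‖d n‖^2 + 2*‖d m‖^2 := by
      simp only [aamr_norm_sq, inner_sub_left, inner_sub_right, inner_add_left, inner_add_right]
      ring
    have h5 : ‖(2:ℝ)⁻¹ • (D (x n) + D (x m))‖ = ‖(2:ℝ)⁻¹ • (d n + d m)‖ := rfl
    nlinarith
  have hcauchy : CauchySeq d := by
    rw [Metric.cauchySeq_iff']
    intro ε hεpos
    have hsq : Tendsto (fun n => ‖d n‖^2) atTop (𝓝 (ρ^2)) := by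
      simpa using hρtend.pow 2
    have : ∀ᶠ N in atTop, ‖d N‖^2 < ρ^2 + ε^2/8 := by
      apply hsq.eventually_lt_const
      linarith [sq_nonneg ε, pow_pos hεpos 2]
    obtain ⟨N, hN⟩ := this.exists
    refine ⟨N, fun n hn => ?_⟩
    have h1 : ‖d n‖^2 ≤ ‖d N‖^2 := by
      have := hdanti hn
      nlinarith [norm_nonneg (d n), norm_nonneg (d N)]
    have h2 := hpar n N
    have h3 : ‖d n - d N‖^2 < ε^2 := by nlinarith
    rw [dist_eq_norm]
    nlinarith [norm_nonneg (d n - d N)]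
  obtain ⟨v, hv⟩ := cauchySeq_tendsto_of_complete hcauchy
  have hvnorm : ‖v‖ = ρ := tendsto_nhds_unique (hv.norm) hρtend
  -- split on ρ
  rcases eq_or_lt_of_le hρ0 with hρeq | hρpos
  · -- ρ = 0 : asymptotic center argument
    have hd0 : Tendsto (fun n => ‖d n‖) atTop (𝓝 0) := by rw [← hρeq] at hρtend; exact hρtend
    by_contra hcon
    rw [tendsto_atTop] at hcon
    push_neg at hcon
    obtain ⟨M, hM⟩ := hcon
    have hM : ∃ᶠ n in atTop, ‖x n‖ < M := by simpa using hM
    obtain ⟨φ, hφ, hφM⟩ := Filter.extraction_of_frequently_atTop hM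
    set U : Ultrafilter ℕ := Ultrafilter.of atTop with hU
    have hUle : (U : Filter ℕ) ≤ atTop := Ultrafilter.of_le _
    haveI : (U : Filter ℕ).NeBot := U.neBot
    -- ultrafilter limits exist
    have hlim : ∀ y : H, ∃ L : ℝ, 0 ≤ L ∧
        Tendsto (fun j => ‖x (φ j) - y‖^2) (U : Filter ℕ) (𝓝 L) := by
      intro y
      set g : ℕ → ℝ := fun j => ‖x (φ j) - y‖^2 with hg
      have hbd : ∀ j, g j ∈ Set.Icc (0:ℝ) ((M + ‖y‖)^2) := by
        intro j
        simp only [hg]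
        constructor
        · positivity
        · have h1 : ‖x (φ j) - y‖ ≤ M + ‖y‖ := by
            linarith [norm_sub_le (x (φ j)) y, (hφM j).le]
          have h0 : (0:ℝ) ≤ ‖x (φ j) - y‖ := norm_nonneg _
          nlinarith
      obtain ⟨L, hLmem, hLle⟩ := (isCompact_Icc (a := (0:ℝ)) (b := (M + ‖y‖)^2)).ultrafilter_le_nhds
        (U.map g) (le_principal_iff.mpr (Filter.mem_map.mpr (Filter.univ_mem' hbd)))
      refine ⟨L, hLmem.1, ?_⟩
      rwa [Ultrafilter.coe_map] at hLle
    choose F hF0 hFt using hlim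
    -- midpoint identity
    have hFmid : ∀ y z : H, F ((2:ℝ)⁻¹ • (y + z)) = 2⁻¹*F y + 2⁻¹*F z - 4⁻¹*‖y - z‖^2 := by
      intro y z
      have h2 := (hFt y).const_mul (2⁻¹ : ℝ)
      have h3 := (hFt z).const_mul (2⁻¹ : ℝ)
      have h4 := (h2.add h3).sub (tendsto_const_nhds (x := (4⁻¹*‖y - z‖^2 : ℝ)))
      have h5 : (fun j => 2⁻¹*‖x (φ j) - y‖^2 + 2⁻¹*‖x (φ j) - z‖^2 - 4⁻¹*‖y - z‖^2)
          = fun j => ‖x (φ j) - (2:ℝ)⁻¹ • (y + z)‖^2 := by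
        funext j; rw [aamr_mid]
      rw [h5] at h4
      exact tendsto_nhds_unique (hFt _) h4
    -- infimum and minimizing sequence
    have hFbdd : BddBelow (Set.range F) := ⟨0, by rintro - ⟨y, rfl⟩; exact hF0 y⟩
    set μ : ℝ := ⨅ y : H, F y with hμ
    have hμle : ∀ y, μ ≤ F y := fun y => ciInf_le hFbdd y
    have hminseq : ∀ j : ℕ, ∃ y, F y < μ + 1/(j+1) := by
      intro j
      apply exists_lt_of_ciInf_lt
      rw [← hμ]
      have : (0:ℝ) < 1/(j+1) := by positivity
      linarith
    choose c hc using hminseq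
    have hM0 : (0:ℝ) < M := lt_of_le_of_lt (norm_nonneg _) (hφM 0)
    -- c is Cauchy
    have hcdist : ∀ n m : ℕ, ‖c n - c m‖^2 ≤ 2*(1/((n:ℝ)+1)) + 2*(1/((m:ℝ)+1)) := by
      intro n m
      have h1 := hFmid (c n) (c m)
      have h2 := hμle ((2:ℝ)⁻¹ • (c n + c m))
      have h3 := hc n
      have h4 := hc m
      linarith
    have hccauchy : CauchySeq c := by
      rw [Metric.cauchySeq_iff']
      intro ε hεpos
      obtain ⟨N, hN⟩ := exists_nat_gt (4/ε^2)
      refine ⟨N, fun n hn => ?_⟩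
      have h1 := hcdist n N
      have h2 : (1:ℝ)/((n:ℝ)+1) ≤ 1/((N:ℝ)+1) := by
        apply one_div_le_one_div_of_le (by positivity)
        have : (N:ℝ) ≤ (n:ℝ) := by exact_mod_cast hn
        linarith
      have h3 : (4:ℝ)*(1/((N:ℝ)+1)) < ε^2 := by
        rw [div_lt_iff₀ (by positivity : (0:ℝ) < ε^2)] at hN
        have hN1 : (0:ℝ) < (N:ℝ)+1 := by positivity
        rw [mul_one_div, div_lt_iff₀ hN1]
        nlinarith [pow_pos hεpos 2]
      rw [dist_eq_norm]
      nlinarith [norm_nonneg (c n - c N)]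
    obtain ⟨cl, hcl⟩ := cauchySeq_tendsto_of_complete hccauchy
    -- Lipschitz-type bound for F
    have hFlip : ∀ y z : H, F y ≤ F z + (2*M + ‖y‖ + 3*‖z‖)*‖y - z‖ := by
      intro y z
      have hpt : ∀ j, ‖x (φ j) - y‖^2 ≤ ‖x (φ j) - z‖^2 + (2*M + ‖y‖ + 3*‖z‖)*‖y - z‖ := by
        intro j
        have h1 : ‖x (φ j) - y‖ ≤ ‖x (φ j) - z‖ + ‖y - z‖ := by
          have := norm_sub_le (x (φ j) - z) (y - z)
          have e : (x (φ j) - z) - (y - z) = x (φ j) - y := by abel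
          rw [e] at this
          linarith [this]
        have h2 : ‖x (φ j) - z‖ ≤ M + ‖z‖ := by
          have := norm_sub_le (x (φ j)) z
          linarith [(hφM j).le]
        have h3 : ‖y - z‖ ≤ ‖y‖ + ‖z‖ := norm_sub_le y z
        have hsq : ‖x (φ j) - y‖^2 ≤ (‖x (φ j) - z‖ + ‖y - z‖)^2 :=
          pow_le_pow_left₀ (norm_nonneg _) h1 2
        have e : (‖x (φ j) - z‖ + ‖y - z‖)^2
            = ‖x (φ j) - z‖^2 + ‖y - z‖*(2*‖x (φ j) - z‖ + ‖y - z‖) := by ring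
        rw [e] at hsq
        have h5 : ‖y - z‖*(2*‖x (φ j) - z‖ + ‖y - z‖) ≤ ‖y - z‖*(2*M + ‖y‖ + 3*‖z‖) :=
          mul_le_mul_of_nonneg_left (by linarith) (norm_nonneg _)
        nlinarith
      have hlimz := (hFt z).add (tendsto_const_nhds (x := ((2*M + ‖y‖ + 3*‖z‖)*‖y - z‖ : ℝ)))
      exact le_of_tendsto_of_tendsto' (hFt y) hlimz hpt
    -- F cl = μ
    have hFcl : F cl = μ := by
      refine le_antisymm ?_ (hμle cl)
      have hub : ∀ j : ℕ, F cl ≤ μ + 1/((j:ℝ)+1) + (2*M + ‖cl‖ + 3*‖c j‖)*‖cl - c j‖ := by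
        intro j
        linarith [hFlip cl (c j), (hc j).le]
      have h1 : Tendsto (fun j:ℕ => 1/((j:ℝ)+1)) atTop (𝓝 0) :=
        tendsto_one_div_add_atTop_nhds_zero_nat
      have h2 : Tendsto (fun j => ‖cl - c j‖) atTop (𝓝 0) := by
        have h := (tendsto_const_nhds (x := cl) (f := atTop)).sub hcl
        have := h.norm
        simpa using this
      have h3 : Tendsto (fun j => 2*M + ‖cl‖ + 3*‖c j‖) atTop (𝓝 (2*M + ‖cl‖ + 3*‖cl‖)) := by
        have := (hcl.norm.const_mul (3:ℝ)).const_add (2*M + ‖cl‖)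
        simpa using this
      have hmul := h3.mul h2
      rw [mul_zero] at hmul
      have htot := (tendsto_const_nhds (x := μ) (f := (atTop : Filter ℕ))).add h1 |>.add hmul
      rw [add_zero, add_zero] at htot
      exact ge_of_tendsto htot (Eventually.of_forall hub)
    -- T cl = cl, contradiction
    have haj : Tendsto (fun j => ‖x (φ j) - cl‖) (U : Filter ℕ) (𝓝 (Real.sqrt (F cl))) := by
      have e : (fun j => ‖x (φ j) - cl‖) = fun j => Real.sqrt (‖x (φ j) - cl‖^2) :=
        funext fun j => (Real.sqrt_sq (norm_nonneg _)).symm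
      rw [e]
      exact (hFt cl).sqrt
    have hεj : Tendsto (fun j => ‖d (φ j)‖) (U : Filter ℕ) (𝓝 0) :=
      (hd0.comp hφ.tendsto_atTop).mono_left hUle
    have hsum2 : Tendsto (fun j => (‖d (φ j)‖ + ‖x (φ j) - cl‖)^2) (U : Filter ℕ) (𝓝 (F cl)) := by
      have h := (hεj.add haj).pow 2
      rw [zero_add, Real.sq_sqrt (hF0 cl)] at h
      exact h
    have hpt : ∀ j, ‖x (φ j) - T cl‖^2 ≤ (‖d (φ j)‖ + ‖x (φ j) - cl‖)^2 := by
      intro j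
      have h1 : ‖x (φ j) - T cl‖ ≤ ‖d (φ j)‖ + ‖x (φ j) - cl‖ := by
        have e : x (φ j) - T cl = (x (φ j) - x (φ j + 1)) + (x (φ j + 1) - T cl) := by abel
        have e2 : x (φ j) - x (φ j + 1) = d (φ j) := by rw [hdx (φ j)]; abel
        have e3 : ‖x (φ j + 1) - T cl‖ ≤ ‖x (φ j) - cl‖ := by
          rw [hrec (φ j)]; exact hTnon _ _
        calc ‖x (φ j) - T cl‖ ≤ ‖x (φ j) - x (φ j + 1)‖ + ‖x (φ j + 1) - T cl‖ := by
              rw [e]; exact norm_add_le _ _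
          _ ≤ ‖d (φ j)‖ + ‖x (φ j) - cl‖ := by rw [e2]; linarith
      have h0 : (0:ℝ) ≤ ‖d (φ j)‖ + ‖x (φ j) - cl‖ := by positivity
      exact pow_le_pow_left₀ (norm_nonneg _) h1 2
    have hTle : F (T cl) ≤ F cl := le_of_tendsto_of_tendsto' (hFt (T cl)) hsum2 hpt
    have hm := hFmid cl (T cl)
    have h2 := hμle ((2:ℝ)⁻¹ • (cl + T cl))
    have hsq0 : ‖cl - T cl‖^2 ≤ 0 := by
      rw [hFcl] at hm hTle
      linarith
    have hn0 : ‖cl - T cl‖ = 0 := by nlinarith [norm_nonneg (cl - T cl), sq_nonneg ‖cl - T cl‖]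
    have : cl = T cl := by
      have := norm_eq_zero.mp hn0
      exact (sub_eq_zero.mp this)
    exact hfix cl this.symm
  · -- ρ > 0 : linear growth
    have hxsum : ∀ n, x n = x 0 - ∑ i ∈ Finset.range n, d i := by
      intro n
      induction n with
      | zero => simp
      | succ m ih => rw [hdx m, ih, Finset.sum_range_succ]; abel
    have hces : Tendsto (fun n : ℕ => (n⁻¹ : ℝ) • ∑ i ∈ Finset.range n, d i) atTop (𝓝 v) :=
      hv.cesaro_smul
    have hcesn : Tendsto (fun n : ℕ => ‖(n⁻¹ : ℝ) • ∑ i ∈ Finset.range n, d i‖) atTop (𝓝 ρ) := by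
      rw [← hvnorm]; exact hces.norm
    have hev : ∀ᶠ n : ℕ in atTop, ρ/2 < ‖(n⁻¹ : ℝ) • ∑ i ∈ Finset.range n, d i‖ :=
      hcesn.eventually_const_lt (by linarith)
    have hge : ∀ᶠ n : ℕ in atTop, (n : ℝ) * (ρ/2) - ‖x 0‖ ≤ ‖x n‖ := by
      filter_upwards [hev, eventually_ge_atTop 1] with n hn hn1
      have hnpos : (0:ℝ) < n := by exact_mod_cast hn1
      have e1 : ‖∑ i ∈ Finset.range n, d i‖ = (n:ℝ) * ‖(n⁻¹ : ℝ) • ∑ i ∈ Finset.range n, d i‖ := by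
        rw [norm_smul]
        simp [abs_of_pos (inv_pos.mpr hnpos)]
        field_simp
      have e2 : ‖x n‖ ≥ ‖∑ i ∈ Finset.range n, d i‖ - ‖x 0‖ := by
        rw [hxsum n]
        have := norm_sub_norm_le (∑ i ∈ Finset.range n, d i) (x 0)
        have e3 : ‖x 0 - ∑ i ∈ Finset.range n, d i‖ = ‖∑ i ∈ Finset.range n, d i - x 0‖ := by
          rw [norm_sub_rev]
        linarith [norm_sub_norm_le (x 0) (∑ i ∈ Finset.range n, d i),
          abs_norm_sub_norm_le (∑ i ∈ Finset.range n, d i) (x 0), e3 ▸ this]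
      have e4 : (n:ℝ) * (ρ/2) ≤ (n:ℝ) * ‖(n⁻¹ : ℝ) • ∑ i ∈ Finset.range n, d i‖ :=
        mul_le_mul_of_nonneg_left hn.le hnpos.le
      linarith [e1 ▸ e4]
    refine tendsto_atTop_mono' atTop hge ?_
    have h1 : Tendsto (fun n : ℕ => (n:ℝ)) atTop atTop := tendsto_natCast_atTop_atTop
    have h2 := h1.atTop_mul_const (by linarith : (0:ℝ) < ρ/2)
    exact tendsto_atTop_add_const_right atTop (-‖x 0‖) h2 |>.congr (fun n => by ring)

end AAMRAux

/-- If either `A ∩ B = ∅`, or `A ∩ B ≠ ∅` but the constraint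
qualification `q − P_{A∩B}(q) ∈ N_A(P_{A∩B}(q)) + N_B(P_{A∩B}(q))` fails, then
the AAMR iterates satisfy `‖x_n‖ → ∞`. -/
theorem stmt_15 {H : Type*} [NormedAddCommGroup H] [InnerProductSpace ℝ H] [CompleteSpace H]
    (A B : Set H) (hAne : A.Nonempty) (hAc : IsClosed A) (hAv : Convex ℝ A)
    (hBne : B.Nonempty) (hBc : IsClosed B) (hBv : Convex ℝ B)
    (α β : ℝ) (hα : α ∈ Set.Ioo (0 : ℝ) 1) (hβ : β ∈ Set.Ioo (0 : ℝ) 1)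
    (q : H)
    (PAq PBq : H → H)
    (hPAq : ∀ x, PAq x ∈ A - {q} ∧ ∀ c ∈ A - {q}, ‖x - PAq x‖ ≤ ‖x - c‖)
    (hPBq : ∀ x, PBq x ∈ B - {q} ∧ ∀ c ∈ B - {q}, ‖x - PBq x‖ ≤ ‖x - c‖)
    (hcase : A ∩ B = ∅ ∨
      ∃ p, (p ∈ A ∩ B ∧ ∀ y ∈ A ∩ B, ‖q - p‖ ≤ ‖q - y‖) ∧
        q - p ∉ normalCone A p + normalCone B p)
    (T : H → H)
    (hT : ∀ x, T x =
      (1 - α) • x + α • ((2 * β) • PBq ((2 * β) • PAq x - x) - ((2 * β) • PAq x - x)))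
    (x : ℕ → H) (hrec : ∀ n, x (n + 1) = T (x n)) :
    Tendsto (fun n => ‖x n‖) atTop atTop := by
  obtain ⟨hα0, hα1⟩ := hα
  obtain ⟨hβ0, hβ1⟩ := hβ
  have hA'v : Convex ℝ (A - ({q} : Set H)) := hAv.sub (convex_singleton q)
  have hB'v : Convex ℝ (B - ({q} : Set H)) := hBv.sub (convex_singleton q)
  set N : H → H := fun z => (2*β) • PBq ((2*β) • PAq z - z) - ((2*β) • PAq z - z) with hN
  have hTN : ∀ z, T z = (1-α) • z + α • N z := hT
  have hNnon : ∀ a b, ‖N a - N b‖ ≤ ‖a - b‖ := by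
    intro a b
    have h1 := aamr_refl_nonexp hA'v hPAq ⟨hβ0, hβ1⟩ a b
    have h2 := aamr_refl_nonexp hB'v hPBq ⟨hβ0, hβ1⟩ ((2*β) • PAq a - a) ((2*β) • PAq b - b)
    exact h2.trans h1
  set k : ℝ := (1-α)/α with hk
  have hkpos : 0 < k := div_pos (by linarith) hα0
  have hkey : ∀ a b : H, ‖T a - T b‖^2 + k*‖(a - T a) - (b - T b)‖^2 ≤ ‖a - b‖^2 := by
    intro a b
    have e1 : T a - T b = (1-α) • (a - b) + α • (N a - N b) := by
      rw [hTN a, hTN b]; module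
    have e2 : (a - T a) - (b - T b) = α • ((a - b) - (N a - N b)) := by
      rw [hTN a, hTN b]; module
    rw [e1, e2]
    have hcomb := aamr_comb α (a-b) (N a - N b)
    have hns : ‖α • ((a - b) - (N a - N b))‖^2 = α^2 * ‖(a-b) - (N a - N b)‖^2 := by
      rw [norm_smul]
      simp [abs_of_pos hα0]
      ring
    rw [hcomb, hns]
    have hkα : k*α^2 = (1-α)*α := by
      rw [hk]; field_simp
    have hNb := hNnon a b
    have hNsq : ‖N a - N b‖^2 ≤ ‖a - b‖^2 := pow_le_pow_left₀ (norm_nonneg _) hNb 2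
    nlinarith [sq_nonneg ‖(a-b) - (N a - N b)‖]
  have hfix : ∀ c, T c ≠ c := by
    intro c hc
    set u : H := PAq c with hu
    set y : H := (2*β) • PAq c - c with hy
    have h1 : (1-α) • c + α • ((2*β) • PBq y - y) = c := by
      rw [hy, ← hT c]; exact hc
    have h2 : (2*β) • PBq y - y = c := by
      apply smul_right_injective H (ne_of_gt hα0)
      show α • ((2*β) • PBq y - y) = α • c
      have e2 : c - (1-α) • c = α • ((2*β) • PBq y - y) := sub_eq_of_eq_add' h1.symm
      have e : c - (1-α) • c = α • c := by module
      rw [← e2, e]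
    have h3 : (2*β) • PBq y = (2*β) • u := by
      have : (2*β) • PBq y = c + y := by rw [← h2]; abel
      rw [this, hy, hu]; module
    have h4 : PBq y = u := smul_right_injective H (by positivity : (2*β) ≠ 0) h3
    have hu1 : u ∈ A - ({q} : Set H) := (hPAq c).1
    have hu2 : u ∈ B - ({q} : Set H) := h4 ▸ (hPBq y).1
    have hva : ∀ a ∈ A - ({q} : Set H), ⟪c - u, a - u⟫ ≤ 0 := fun a ha =>
      aamr_vi hA'v hPAq c ha
    have hvb : ∀ b ∈ B - ({q} : Set H), ⟪y - u, b - u⟫ ≤ 0 := fun b hb => by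
      have := aamr_vi hB'v hPBq y hb
      rwa [h4] at this
    set p : H := u + q with hp
    have hpA : p ∈ A := by
      obtain ⟨a0, ha0, q0, hq0, he⟩ := hu1
      rw [Set.mem_singleton_iff] at hq0
      subst hq0
      have : p = a0 := by rw [hp, ← he]; module
      rwa [this]
    have hpB : p ∈ B := by
      obtain ⟨a0, ha0, q0, hq0, he⟩ := hu2
      rw [Set.mem_singleton_iff] at hq0
      subst hq0
      have : p = a0 := by rw [hp, ← he]; module
      rwa [this]
    set s : ℝ := (2*(1-β))⁻¹ with hs
    have hspos : 0 < s := by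
      rw [hs]
      have h1β : (0:ℝ) < 2*(1-β) := by nlinarith
      exact inv_pos.mpr h1β
    have hmemA : s • (c - u) ∈ normalCone A p := by
      refine ⟨hpA, fun cc hcc => ?_⟩
      have hcc' : cc - q ∈ A - ({q} : Set H) := ⟨cc, hcc, q, rfl, rfl⟩
      have := hva (cc - q) hcc'
      have e : cc - p = (cc - q) - u := by rw [hp]; abel
      rw [e, real_inner_smul_left]
      exact mul_nonpos_of_nonneg_of_nonpos hspos.le this
    have hmemB : s • (y - u) ∈ normalCone B p := by
      refine ⟨hpB, fun cc hcc => ?_⟩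
      have hcc' : cc - q ∈ B - ({q} : Set H) := ⟨cc, hcc, q, rfl, rfl⟩
      have := hvb (cc - q) hcc'
      have e : cc - p = (cc - q) - u := by rw [hp]; abel
      rw [e, real_inner_smul_left]
      exact mul_nonpos_of_nonneg_of_nonpos hspos.le this
    have hsum : s • (c - u) + s • (y - u) = q - p := by
      have e1 : (c - u) + (y - u) = (2*β - 2) • u := by
        rw [hy, hu]; module
      have e2 : s • (c - u) + s • (y - u) = s • ((c - u) + (y - u)) := by
        rw [smul_add]
      rw [e2, e1, smul_smul, hp]
      have e3 : s * (2*β - 2) = -1 := by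
        have hne : (2*(1-β)) ≠ 0 := by nlinarith
        rw [hs, inv_mul_eq_div, div_eq_iff hne]
        ring
      rw [e3]
      module
    have hqp : q - p ∈ normalCone A p + normalCone B p :=
      hsum ▸ Set.add_mem_add hmemA hmemB
    -- p minimizes distance from q over A ∩ B
    have hpmin : ∀ yy ∈ A ∩ B, ‖q - p‖ ≤ ‖q - yy‖ := by
      intro yy hyy
      obtain ⟨w1, hw1, w2, hw2, hw⟩ := hqp
      have hi1 : ⟪w1, yy - p⟫ ≤ 0 := hw1.2 yy hyy.1
      have hi2 : ⟪w2, yy - p⟫ ≤ 0 := hw2.2 yy hyy.2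
      have hi : ⟪q - p, yy - p⟫ ≤ 0 := by
        rw [← hw, inner_add_left]; linarith
      have e : q - yy = (q - p) - (yy - p) := by abel
      have hsq : ‖q - yy‖^2 = ‖q - p‖^2 - 2*⟪q - p, yy - p⟫ + ‖yy - p‖^2 := by
        rw [e, norm_sub_sq_real]
      have h5 : ‖q - p‖^2 ≤ ‖q - yy‖^2 := by nlinarith [sq_nonneg ‖yy - p‖]
      nlinarith [norm_nonneg (q - p), norm_nonneg (q - yy)]
    rcases hcase with hemp | ⟨p', ⟨⟨hp'AB, hp'min⟩, hp'not⟩⟩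
    · have : p ∈ A ∩ B := ⟨hpA, hpB⟩
      rw [hemp] at this
      exact this
    · -- uniqueness of the minimizer
      have hnorm : ‖q - p‖ = ‖q - p'‖ :=
        le_antisymm (hpmin p' hp'AB) (hp'min p ⟨hpA, hpB⟩)
      have hmidmem : (2:ℝ)⁻¹ • (p + p') ∈ A ∩ B := by
        have := (hAv.inter hBv) ⟨hpA, hpB⟩ hp'AB
          (by norm_num : (0:ℝ) ≤ 2⁻¹) (by norm_num : (0:ℝ) ≤ 2⁻¹) (by norm_num)
        simpa [smul_add] using this
      have hmid := aamr_mid q p p'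
      have h6 : ‖q - p'‖ ≤ ‖q - (2:ℝ)⁻¹ • (p + p')‖ := hp'min _ hmidmem
      have h6sq : ‖q - p'‖^2 ≤ ‖q - (2:ℝ)⁻¹ • (p + p')‖^2 :=
        pow_le_pow_left₀ (norm_nonneg _) h6 2
      rw [hnorm] at hmid
      have h7 : ‖p - p'‖^2 ≤ 0 := by linarith
      have h8 : p = p' := by
        have : ‖p - p'‖ = 0 := by nlinarith [norm_nonneg (p - p'), sq_nonneg ‖p - p'‖]
        exact sub_eq_zero.mp (norm_eq_zero.mp this)
      exact hp'not (h8 ▸ hqp)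
  exact aamr_diverge hkpos hkey hfix x hrec
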